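/- Let H be a complex Hilbert space, U : H → H a unitary operator and P : H → H an orthogonal projection, and set Φ := U*PU − P. Then Φ is self-adjoint, Φ² ≤ 1 (i.e. 1 − Φ² is a positive operator), and Φ² commutes with P. -/

import Mathlib

open ContinuousLinearMap

/-- For a unitary `U` and an orthogonal projection `P` on a complex Hilbert
space, the flux operator `Φ = U*PU − P` is self-adjoint, satisfies `Φ² ≤ 1` (i.e. `1 − Φ²` is a
positive operator), and `Φ²` commutes with `P`. -/
theorem stmt_0 {H : Type*} [NormedAddCommGroup H] [InnerProductSpace ℂ H] [CompleteSpace H]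
    (U P : H →L[ℂ] H)
    (hU1 : adjoint U * U = 1) (hU2 : U * adjoint U = 1)
    (hPsa : IsSelfAdjoint P) (hPidem : P * P = P)
    (Φ : H →L[ℂ] H) (hΦ : Φ = adjoint U * P * U - P) :
    IsSelfAdjoint Φ ∧ (1 - Φ ^ 2).IsPositive ∧ Commute (Φ ^ 2) P := by
  rw [← star_eq_adjoint] at hU1 hU2 hΦ
  have hPstar : star P = P := hPsa
  set Q : H →L[ℂ] H := star U * P * U with hQ
  have hQstar : star Q = Q := by
    rw [hQ]
    simp [star_mul, hPstar, mul_assoc]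
  have hQidem : Q * Q = Q := by
    rw [hQ]
    calc (star U * P * U) * (star U * P * U)
        = star U * (P * ((U * star U) * (P * U))) := by
          simp only [mul_assoc]
      _ = star U * P * U := by rw [hU2, one_mul, ← mul_assoc P P U, hPidem, mul_assoc]
  have hΦQ : Φ = Q - P := hΦ
  have hΦsa : IsSelfAdjoint Φ := by
    rw [IsSelfAdjoint, hΦQ, star_sub, hQstar, hPstar]
  have hsq : Φ ^ 2 = Q + P - Q * P - P * Q := by
    rw [hΦQ, sq, mul_sub, sub_mul, sub_mul, hQidem, hPidem]
    abel
  refine ⟨hΦsa, ?_, ?_⟩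
  · have hSstar : star (P + Q - 1) = P + Q - 1 := by
      rw [star_sub, star_add, hPstar, hQstar, star_one]
    have key : 1 - Φ ^ 2 = star (P + Q - 1) * (P + Q - 1) := by
      rw [hSstar, hsq]
      simp only [sub_mul, mul_sub, add_mul, mul_add, hQidem, hPidem, one_mul, mul_one]
      abel
    have hpos := (isPositive_one (E := H) (𝕜 := ℂ)).adjoint_conj (P + Q - 1)
    rw [key, star_eq_adjoint]
    simpa [mul_def, one_def] using hpos
  · show Φ ^ 2 * P = P * Φ ^ 2
    rw [hsq]
    simp only [sub_mul, add_mul, mul_sub, mul_add, mul_assoc, hPidem]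
    rw [← mul_assoc P Q P, ← mul_assoc P P Q, hPidem]
    abel
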